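/- arXiv:2605.10777 — 2 statements merged into one kernel-verified Lean document; each statement's English description precedes it below -/
import Mathlib

section
/- For every real a > 0, the largest Rayleigh value of the Hessian of ℓ at the scaled point (a⁻¹ W1, a W2) satisfies λ_max(a⁻¹ W1, a W2) ≥ 2 a² σ_max(W2)². -/
open Matrix

/-- Squared Frobenius norm. -/
def froSq {d : ℕ} (A : Matrix (Fin d) (Fin d) ℝ) : ℝ :=
  ∑ i, ∑ j, (A i j) ^ 2

/-- The matrix-factorization loss ℓ(A, B) = ‖A B − M‖_F². -/
def loss {d : ℕ} (M A B : Matrix (Fin d) (Fin d) ℝ) : ℝ :=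
  froSq (A * B - M)

/-- The Hessian quadratic form of ℓ at `(A, B)` in direction `(E1, E2)`:
`Q_{(A,B)}(E1, E2) = (d²/dt²)|_{t=0} ℓ(A + t E1, B + t E2)`. -/
noncomputable def hessQ {d : ℕ} (M A B E1 E2 : Matrix (Fin d) (Fin d) ℝ) : ℝ :=
  iteratedDeriv 2 (fun t : ℝ => loss M (A + t • E1) (B + t • E2)) 0

/-- Largest Rayleigh value of the Hessian of ℓ at `(A, B)`:
`λ_max(A, B) = sup { Q_{(A,B)}(E1, E2) : ‖E1‖_F² + ‖E2‖_F² = 1 }`. -/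
noncomputable def lamMax {d : ℕ} (M A B : Matrix (Fin d) (Fin d) ℝ) : ℝ :=
  sSup {q : ℝ | ∃ E1 E2 : Matrix (Fin d) (Fin d) ℝ,
    froSq E1 + froSq E2 = 1 ∧ q = hessQ M A B E1 E2}

/-- Euclidean (ℓ₂) norm of a vector in ℝ^d. -/
noncomputable def enorm' {d : ℕ} (x : Fin d → ℝ) : ℝ :=
  Real.sqrt (∑ i, (x i) ^ 2)

/-- The largest singular value of `W`: `sup_{‖x‖₂ = 1} ‖W x‖₂`. -/
noncomputable def sigmaMax {d : ℕ} (W : Matrix (Fin d) (Fin d) ℝ) : ℝ :=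
  sSup {y : ℝ | ∃ x : Fin d → ℝ, enorm' x = 1 ∧ y = enorm' (W.mulVec x)}

/- ### auxiliary lemmas -/
lemma iter2_poly (c0 c1 c2 c3 c4 : ℝ) :
    iteratedDeriv 2 (fun t : ℝ => c0 + c1*t + c2*t^2 + c3*t^3 + c4*t^4) 0 = 2*c2 := by
  have hf : ∀ t : ℝ, HasDerivAt (fun t : ℝ => c0 + c1*t + c2*t^2 + c3*t^3 + c4*t^4)
      (c1 + 2*c2*t + 3*c3*t^2 + 4*c4*t^3) t := by
    intro t
    have h : HasDerivAt (fun t : ℝ => c0 + c1*t + c2*t^2 + c3*t^3 + c4*t^4)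
        (0 + c1*1 + c2*((2:ℕ)*t^(2-1)) + c3*((3:ℕ)*t^(3-1)) + c4*((4:ℕ)*t^(4-1))) t := by
      exact ((((hasDerivAt_const t c0).add ((hasDerivAt_id t).const_mul c1)).add
        ((hasDerivAt_pow 2 t).const_mul c2)).add ((hasDerivAt_pow 3 t).const_mul c3)).add
        ((hasDerivAt_pow 4 t).const_mul c4)
    convert h using 1
    push_cast
    ring
  have hg : ∀ t : ℝ, HasDerivAt (fun t : ℝ => c1 + 2*c2*t + 3*c3*t^2 + 4*c4*t^3)
      (2*c2 + 6*c3*t + 12*c4*t^2) t := by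
    intro t
    have h : HasDerivAt (fun t : ℝ => c1 + 2*c2*t + 3*c3*t^2 + 4*c4*t^3)
        (0 + (2*c2)*1 + (3*c3)*((2:ℕ)*t^(2-1)) + (4*c4)*((3:ℕ)*t^(3-1))) t := by
      exact (((hasDerivAt_const t c1).add ((hasDerivAt_id t).const_mul (2*c2))).add
        ((hasDerivAt_pow 2 t).const_mul (3*c3))).add ((hasDerivAt_pow 3 t).const_mul (4*c4))
    convert h using 1
    push_cast
    ring
  rw [iteratedDeriv_succ, iteratedDeriv_one]
  have hd1 : deriv (fun t : ℝ => c0 + c1*t + c2*t^2 + c3*t^3 + c4*t^4)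
      = fun t : ℝ => c1 + 2*c2*t + 3*c3*t^2 + 4*c4*t^3 := by
    funext t; exact (hf t).deriv
  rw [hd1]
  simpa using (hg 0).deriv

def minner {d : ℕ} (P Q : Matrix (Fin d) (Fin d) ℝ) : ℝ := ∑ i, ∑ j, P i j * Q i j

lemma froSq_nonneg {d : ℕ} (A : Matrix (Fin d) (Fin d) ℝ) : 0 ≤ froSq A :=
  Finset.sum_nonneg fun _ _ => Finset.sum_nonneg fun _ _ => sq_nonneg _

lemma hessQ_eq {d : ℕ} (M A B E1 E2 : Matrix (Fin d) (Fin d) ℝ) :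
    hessQ M A B E1 E2 = 2 * froSq (A*E2 + E1*B) + 4 * minner (A*B - M) (E1*E2) := by
  set P := A*B - M with hP
  set S := A*E2 + E1*B with hS
  set T := E1*E2 with hT
  have hfun : (fun t : ℝ => loss M (A + t • E1) (B + t • E2))
      = fun t : ℝ => froSq P + (2*minner P S)*t + (froSq S + 2*minner P T)*t^2
        + (2*minner S T)*t^3 + (froSq T)*t^4 := by
    funext t
    have hentry : ∀ i j, ((A + t • E1) * (B + t • E2) - M) i j
        = P i j + t * S i j + t^2 * T i j := by
      intro i j
      have expand : ∑ k, (A i k + t*E1 i k)*(B k j + t*E2 k j)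
          = (∑ k, A i k * B k j) + t * (∑ k, (A i k * E2 k j + E1 i k * B k j))
            + t^2 * (∑ k, E1 i k * E2 k j) := by
        rw [Finset.mul_sum, Finset.mul_sum, ← Finset.sum_add_distrib,
          ← Finset.sum_add_distrib]
        apply Finset.sum_congr rfl; intro k _; ring
      simp only [hP, hS, hT, Matrix.sub_apply, Matrix.add_apply, Matrix.mul_apply,
        Matrix.smul_apply, smul_eq_mul]
      rw [expand, Finset.sum_add_distrib]
      ring
    simp only [loss, froSq]
    calc ∑ i, ∑ j, (((A + t • E1) * (B + t • E2) - M) i j)^2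
        = ∑ i, ∑ j, ((P i j)^2 + (2*(P i j * S i j))*t
            + ((S i j)^2 + 2*(P i j * T i j))*t^2
            + (2*(S i j * T i j))*t^3 + ((T i j)^2)*t^4) := by
          apply Finset.sum_congr rfl; intro i _
          apply Finset.sum_congr rfl; intro j _
          rw [hentry i j]; ring
      _ = _ := by
          simp only [Finset.sum_add_distrib, ← Finset.sum_mul, froSq, minner,
            Finset.mul_sum]
  rw [hessQ, hfun, iter2_poly]
  ring

lemma froSq_add_le {d : ℕ} (A B : Matrix (Fin d) (Fin d) ℝ) :
    froSq (A + B) ≤ 2 * froSq A + 2 * froSq B := by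
  calc froSq (A + B) ≤ ∑ i, ∑ j, (2*(A i j)^2 + 2*(B i j)^2) := by
        apply Finset.sum_le_sum; intro i _
        apply Finset.sum_le_sum; intro j _
        simp only [Matrix.add_apply]
        nlinarith [sq_nonneg (A i j - B i j)]
    _ = 2 * froSq A + 2 * froSq B := by
        simp only [froSq, Finset.sum_add_distrib, Finset.mul_sum]

lemma froSq_mul_le {d : ℕ} (A B : Matrix (Fin d) (Fin d) ℝ) :
    froSq (A * B) ≤ froSq A * froSq B := by
  have h1 : froSq (A * B) ≤ ∑ i, ∑ j, (∑ k, (A i k)^2) * (∑ k, (B k j)^2) := by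
    simp only [froSq, Matrix.mul_apply]
    apply Finset.sum_le_sum; intro i _
    apply Finset.sum_le_sum; intro j _
    exact Finset.sum_mul_sq_le_sq_mul_sq Finset.univ (A i) (fun k => B k j)
  refine h1.trans_eq ?_
  rw [show (∑ i, ∑ j, (∑ k, (A i k)^2) * (∑ k, (B k j)^2) : ℝ)
      = (∑ i, ∑ k, (A i k)^2) * (∑ j, ∑ k, (B k j)^2) from
    (Finset.sum_mul_sum _ _ _ _).symm]
  rw [froSq, froSq]
  congr 1
  exact Finset.sum_comm

lemma minner_le {d : ℕ} (P Q : Matrix (Fin d) (Fin d) ℝ) :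
    minner P Q ≤ (froSq P + froSq Q) / 2 := by
  rw [div_eq_inv_mul, froSq, froSq, ← Finset.sum_add_distrib, Finset.mul_sum]
  apply Finset.sum_le_sum; intro i _
  rw [← Finset.sum_add_distrib, Finset.mul_sum]
  apply Finset.sum_le_sum; intro j _
  nlinarith [sq_nonneg (P i j - Q i j)]

lemma lamMax_bddAbove {d : ℕ} (M A B : Matrix (Fin d) (Fin d) ℝ) :
    BddAbove {q : ℝ | ∃ E1 E2 : Matrix (Fin d) (Fin d) ℝ,
      froSq E1 + froSq E2 = 1 ∧ q = hessQ M A B E1 E2} := by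
  refine ⟨4 * (froSq A + froSq B) + 2 * froSq (A*B - M) + 2, ?_⟩
  rintro q ⟨E1, E2, hE, rfl⟩
  have hE1 : froSq E1 ≤ 1 := by have := froSq_nonneg E2; linarith
  have hE2 : froSq E2 ≤ 1 := by have := froSq_nonneg E1; linarith
  have hE1n := froSq_nonneg E1
  have hE2n := froSq_nonneg E2
  rw [hessQ_eq]
  have h1 : froSq (A*E2 + E1*B) ≤ 2 * (froSq A * froSq E2) + 2 * (froSq E1 * froSq B) :=
    (froSq_add_le _ _).trans (by
      have := froSq_mul_le A E2; have := froSq_mul_le E1 B; linarith)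
  have h2 : minner (A*B - M) (E1*E2) ≤ (froSq (A*B - M) + froSq E1 * froSq E2) / 2 :=
    (minner_le _ _).trans (by have := froSq_mul_le E1 E2; linarith)
  have hA := froSq_nonneg A
  have hB := froSq_nonneg B
  have h3 : froSq A * froSq E2 ≤ froSq A := by nlinarith
  have h4 : froSq E1 * froSq B ≤ froSq B := by nlinarith
  have h5 : froSq E1 * froSq E2 ≤ 1 := by nlinarith
  nlinarith

/- ### vector lemmas -/

lemma enorm_nonneg {d : ℕ} (x : Fin d → ℝ) : 0 ≤ enorm' x := Real.sqrt_nonneg _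

lemma enorm_sq {d : ℕ} (x : Fin d → ℝ) : (enorm' x)^2 = ∑ i, (x i)^2 :=
  Real.sq_sqrt (Finset.sum_nonneg fun _ _ => sq_nonneg _)

lemma dotProduct_le {d : ℕ} (x y : Fin d → ℝ) : x ⬝ᵥ y ≤ enorm' x * enorm' y := by
  have h := Finset.sum_mul_sq_le_sq_mul_sq Finset.univ x y
  have hx := enorm_nonneg x
  have hy := enorm_nonneg y
  have hx2 := enorm_sq x
  have hy2 := enorm_sq y
  rw [dotProduct]
  calc ∑ i, x i * y i ≤ |∑ i, x i * y i| := le_abs_self _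
    _ = Real.sqrt ((∑ i, x i * y i)^2) := (Real.sqrt_sq_eq_abs _).symm
    _ ≤ Real.sqrt ((∑ i, (x i)^2) * (∑ i, (y i)^2)) := Real.sqrt_le_sqrt h
    _ = enorm' x * enorm' y := by
        rw [Real.sqrt_mul (Finset.sum_nonneg fun _ _ => sq_nonneg _), enorm', enorm']

lemma sigma_bddAbove {d : ℕ} (V : Matrix (Fin d) (Fin d) ℝ) :
    BddAbove {y : ℝ | ∃ x : Fin d → ℝ, enorm' x = 1 ∧ y = enorm' (V.mulVec x)} := by
  refine ⟨Real.sqrt (froSq V), ?_⟩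
  rintro y ⟨x, hx, rfl⟩
  have hx2 : ∑ j, (x j)^2 = 1 := by rw [← enorm_sq, hx]; norm_num
  rw [enorm']
  apply Real.sqrt_le_sqrt
  have : ∀ i, ((V.mulVec x) i)^2 ≤ ∑ j, (V i j)^2 := by
    intro i
    have h := Finset.sum_mul_sq_le_sq_mul_sq Finset.univ (V i) x
    rw [hx2, mul_one] at h
    simpa [Matrix.mulVec, dotProduct] using h
  exact (Finset.sum_le_sum fun i _ => this i)

def evec {d : ℕ} (hd : 0 < d) : Fin d → ℝ := fun i => if i = ⟨0, hd⟩ then 1 else 0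

lemma enorm_evec {d : ℕ} (hd : 0 < d) : enorm' (evec hd) = 1 := by
  rw [enorm']
  have : ∑ i, (evec hd i)^2 = 1 := by
    simp [evec, apply_ite (·^2)]
  rw [this, Real.sqrt_one]

lemma sigma_nonempty {d : ℕ} (hd : 0 < d) (V : Matrix (Fin d) (Fin d) ℝ) :
    {y : ℝ | ∃ x : Fin d → ℝ, enorm' x = 1 ∧ y = enorm' (V.mulVec x)}.Nonempty :=
  ⟨_, evec hd, enorm_evec hd, rfl⟩

lemma sigma_nonneg {d : ℕ} (hd : 0 < d) (V : Matrix (Fin d) (Fin d) ℝ) :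
    0 ≤ sigmaMax V :=
  le_trans (enorm_nonneg _) (le_csSup (sigma_bddAbove V) ⟨evec hd, enorm_evec hd, rfl⟩)

lemma enorm'_smul {d : ℕ} (c : ℝ) (x : Fin d → ℝ) : enorm' (c • x) = |c| * enorm' x := by
  rw [enorm', enorm']
  have : ∑ i, ((c • x) i)^2 = c^2 * ∑ i, (x i)^2 := by
    simp [Finset.mul_sum, mul_pow]
  rw [this, Real.sqrt_mul (sq_nonneg c), Real.sqrt_sq_eq_abs]

lemma enorm_mulVec_le {d : ℕ} (hd : 0 < d) (V : Matrix (Fin d) (Fin d) ℝ) (y : Fin d → ℝ) :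
    enorm' (V.mulVec y) ≤ sigmaMax V * enorm' y := by
  rcases eq_or_ne (enorm' y) 0 with h0 | h0
  · have hy : y = 0 := by
      funext i
      have hsum : ∑ i, (y i)^2 = 0 := by rw [← enorm_sq, h0]; norm_num
      have := (Finset.sum_eq_zero_iff_of_nonneg (fun i _ => sq_nonneg (y i))).mp hsum
        i (Finset.mem_univ i)
      exact pow_eq_zero_iff (n := 2) (by norm_num) |>.mp this
    simp [hy, enorm']
  · have hpos : 0 < enorm' y := lt_of_le_of_ne (enorm_nonneg y) (Ne.symm h0)
    set c := (enorm' y)⁻¹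
    have hc : 0 < c := inv_pos.mpr hpos
    have hux : enorm' (c • y) = 1 := by
      rw [enorm'_smul, abs_of_pos hc]
      exact inv_mul_cancel₀ h0
    have hmem : enorm' (V.mulVec (c • y)) ≤ sigmaMax V :=
      le_csSup (sigma_bddAbove V) ⟨c • y, hux, rfl⟩
    rw [Matrix.mulVec_smul, enorm'_smul, abs_of_pos hc] at hmem
    calc enorm' (V.mulVec y) = enorm' y * (c * enorm' (V.mulVec y)) := by
          rw [← mul_assoc, mul_inv_cancel₀ h0, one_mul]
      _ ≤ enorm' y * sigmaMax V := mul_le_mul_of_nonneg_left hmem (le_of_lt hpos)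
      _ = sigmaMax V * enorm' y := mul_comm _ _

lemma sigma_transpose_le {d : ℕ} (hd : 0 < d) (V : Matrix (Fin d) (Fin d) ℝ) :
    sigmaMax V ≤ sigmaMax Vᵀ := by
  apply csSup_le (sigma_nonempty hd V)
  rintro y ⟨x, hx, rfl⟩
  set z := V.mulVec x with hz
  have key : (enorm' z)^2 ≤ sigmaMax Vᵀ * enorm' z := by
    have h1 : (enorm' z)^2 = z ⬝ᵥ z := by
      rw [enorm_sq, dotProduct]; apply Finset.sum_congr rfl; intros; ring
    have h2 : z ⬝ᵥ z = (Vᵀ.mulVec z) ⬝ᵥ x := by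
      rw [hz]
      rw [Matrix.dotProduct_mulVec, Matrix.mulVec_transpose]
    have h3 : (Vᵀ.mulVec z) ⬝ᵥ x ≤ enorm' (Vᵀ.mulVec z) * enorm' x := dotProduct_le _ _
    have h4 : enorm' (Vᵀ.mulVec z) ≤ sigmaMax Vᵀ * enorm' z :=
      enorm_mulVec_le hd Vᵀ z
    calc (enorm' z)^2 = z ⬝ᵥ z := h1
      _ = (Vᵀ.mulVec z) ⬝ᵥ x := h2
      _ ≤ enorm' (Vᵀ.mulVec z) * enorm' x := h3
      _ = enorm' (Vᵀ.mulVec z) := by rw [hx, mul_one]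
      _ ≤ sigmaMax Vᵀ * enorm' z := h4
  rcases eq_or_lt_of_le (enorm_nonneg z) with h0 | h0
  · rw [← h0]; exact sigma_nonneg hd Vᵀ
  · nlinarith

/-- For every `a > 0`, `λ_max(a⁻¹ W1, a W2) ≥ 2 a² σ_max(W2)²`. -/
theorem lamMax_scaled_lower_bound (d : ℕ) (hd : 0 < d)
    (M W1 W2 : Matrix (Fin d) (Fin d) ℝ) (a : ℝ) (ha : 0 < a) :
    2 * a ^ 2 * sigmaMax W2 ^ 2 ≤ lamMax M (a⁻¹ • W1) (a • W2) := by
  set A := a⁻¹ • W1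
  set B := a • W2
  set L := lamMax M A B with hL
  -- for each unit x, the direction E1 = e₀ xᵀ, E2 = 0 gives value 2 a² ‖W2ᵀ x‖²
  have key : ∀ x : Fin d → ℝ, enorm' x = 1 →
      2 * a^2 * (enorm' (W2ᵀ.mulVec x))^2 ≤ L := by
    intro x hx
    set E1 : Matrix (Fin d) (Fin d) ℝ := fun i j => if i = ⟨0, hd⟩ then x j else 0 with hE1
    have hx2 : ∑ j, (x j)^2 = 1 := by rw [← enorm_sq, hx]; norm_num
    have hfE1 : froSq E1 = 1 := by
      rw [froSq]
      have : ∀ i, ∑ j, (E1 i j)^2 = if i = ⟨0, hd⟩ then 1 else 0 := by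
        intro i
        by_cases h : i = ⟨0, hd⟩ <;> simp [hE1, h, hx2]
      simp_rw [this]
      simp
    have hmem : hessQ M A B E1 0 ∈ {q : ℝ | ∃ E1 E2 : Matrix (Fin d) (Fin d) ℝ,
        froSq E1 + froSq E2 = 1 ∧ q = hessQ M A B E1 E2} := by
      refine ⟨E1, 0, ?_, rfl⟩
      rw [hfE1]
      simp [froSq]
    have hle : hessQ M A B E1 0 ≤ L := le_csSup (lamMax_bddAbove M A B) hmem
    have hval : hessQ M A B E1 0 = 2 * a^2 * (enorm' (W2ᵀ.mulVec x))^2 := by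
      rw [hessQ_eq]
      have hm0 : minner (A*B - M) (E1 * 0) = 0 := by simp [minner]
      have hAB : A * 0 + E1 * B = E1 * B := by simp
      rw [hm0, hAB, mul_zero, add_zero]
      have hEB : froSq (E1 * B) = a^2 * (enorm' (W2ᵀ.mulVec x))^2 := by
        have h1 : E1 * B = a • (E1 * W2) := by
          rw [Matrix.mul_smul]
        rw [h1]
        have h2 : froSq (a • (E1 * W2)) = a^2 * froSq (E1 * W2) := by
          simp [froSq, Finset.mul_sum, mul_pow]
        rw [h2, enorm_sq]
        congr 1
        rw [froSq]
        have hrow : ∀ i, ∑ j, ((E1 * W2) i j)^2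
            = if i = ⟨0, hd⟩ then ∑ j, ((W2ᵀ.mulVec x) j)^2 else 0 := by
          intro i
          by_cases h : i = ⟨0, hd⟩
          · simp only [h, if_true]
            apply Finset.sum_congr rfl
            intro j _
            congr 1
            simp only [Matrix.mul_apply]
            simp [Matrix.mul_apply, hE1, Matrix.mulVec, dotProduct, Matrix.transpose_apply,
              mul_comm]
          · simp only [Matrix.mul_apply]
            simp [Matrix.mul_apply, hE1, h]
        simp_rw [hrow]
        simp
      rw [hEB]; ring
    rw [← hval]; exact hle
  have hL0 : 0 ≤ L := by
    have h := key (evec hd) (enorm_evec hd)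
    nlinarith [sq_nonneg (enorm' (W2ᵀ.mulVec (evec hd))), sq_nonneg a, enorm_nonneg (W2ᵀ.mulVec (evec hd)), ha]
  have ha2 : (0:ℝ) < 2 * a^2 := by positivity
  -- σ(W2ᵀ) ≤ sqrt (L / (2a²))
  have hsig : sigmaMax W2ᵀ ≤ Real.sqrt (L / (2 * a^2)) := by
    apply csSup_le (sigma_nonempty hd W2ᵀ)
    rintro y ⟨x, hx, rfl⟩
    rw [Real.le_sqrt (enorm_nonneg _) (div_nonneg hL0 ha2.le), le_div_iff₀ ha2]
    linarith [key x hx]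
  have hσn : 0 ≤ sigmaMax W2ᵀ := sigma_nonneg hd W2ᵀ
  have hsq : (sigmaMax W2ᵀ)^2 ≤ L / (2 * a^2) := by
    have := pow_le_pow_left₀ hσn hsig 2
    rwa [Real.sq_sqrt (by positivity)] at this
  have htr : sigmaMax W2 ≤ sigmaMax W2ᵀ := sigma_transpose_le hd W2
  have hσ2 : (sigmaMax W2)^2 ≤ (sigmaMax W2ᵀ)^2 :=
    pow_le_pow_left₀ (sigma_nonneg hd W2) htr 2
  calc 2 * a^2 * sigmaMax W2 ^ 2 ≤ 2 * a^2 * (sigmaMax W2ᵀ)^2 := by nlinarith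
    _ ≤ 2 * a^2 * (L / (2*a^2)) := by nlinarith
    _ = L := by field_simp
end

section
/- For every real a > 0, the smallest Rayleigh value of the Hessian of ℓ at the scaled point (a⁻¹ W1, a W2) satisfies λ_min(a⁻¹ W1, a W2) ≤ 2 a⁻² σ_min(W1)². -/
open Matrix

/-- Smallest Rayleigh value of the Hessian of ℓ at `(A, B)`:
`λ_min(A, B) = inf { Q_{(A,B)}(E1, E2) : ‖E1‖_F² + ‖E2‖_F² = 1 }`. -/
noncomputable def lamMin {d : ℕ} (M A B : Matrix (Fin d) (Fin d) ℝ) : ℝ :=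
  sInf {q : ℝ | ∃ E1 E2 : Matrix (Fin d) (Fin d) ℝ,
    froSq E1 + froSq E2 = 1 ∧ q = hessQ M A B E1 E2}

/-- Euclidean (ℓ₂) norm of a vector in ℝ^d. -/
noncomputable def euclNorm {d : ℕ} (x : Fin d → ℝ) : ℝ :=
  Real.sqrt (∑ i, (x i) ^ 2)

/-- The smallest singular value of `W`: `min_{‖x‖₂ = 1} ‖W x‖₂`. -/
noncomputable def sigmaMin {d : ℕ} (W : Matrix (Fin d) (Fin d) ℝ) : ℝ :=
  sInf {y : ℝ | ∃ x : Fin d → ℝ, euclNorm x = 1 ∧ y = euclNorm (W.mulVec x)}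

lemma iter2_quad (c0 c1 c2 : ℝ) :
    iteratedDeriv 2 (fun t : ℝ => c0 + c1 * t + c2 * t ^ 2) 0 = 2 * c2 := by
  have hdd : ∀ t : ℝ, HasDerivAt (fun t : ℝ => c0 + c1 * t + c2 * t ^ 2) (c1 + c2 * (2 * t)) t := by
    intro t
    have h1 : HasDerivAt (fun t : ℝ => c1 * t) c1 t := by
      simpa using (hasDerivAt_id t).const_mul c1
    have h2 : HasDerivAt (fun t : ℝ => c2 * t ^ 2) (c2 * (2 * t)) t := by
      simpa using (hasDerivAt_pow 2 t).const_mul c2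
    have := ((hasDerivAt_const t c0).add h1).add h2
    simp only [zero_add] at this
    exact this
  rw [show (2:ℕ) = 1 + 1 from rfl, iteratedDeriv_succ, iteratedDeriv_one]
  have hder : (deriv fun t : ℝ => c0 + c1 * t + c2 * t ^ 2) = fun t => c1 + c2 * (2 * t) :=
    funext fun t => (hdd t).deriv
  rw [hder]
  have h2 : HasDerivAt (fun t : ℝ => c1 + c2 * (2 * t)) (c2 * 2) 0 := by
    have := ((hasDerivAt_const (0:ℝ) c1).add (((hasDerivAt_id (0:ℝ)).const_mul 2).const_mul c2))
    simp only [zero_add, mul_one] at this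
    exact this
  rw [h2.deriv]; ring

lemma froSq_add_smul {d : ℕ} (C D : Matrix (Fin d) (Fin d) ℝ) (t : ℝ) :
    froSq (C + t • D) = froSq C + (∑ i, ∑ j, 2 * C i j * D i j) * t + froSq D * t ^ 2 := by
  unfold froSq
  simp only [Matrix.add_apply, Matrix.smul_apply, smul_eq_mul]
  rw [Finset.sum_mul, Finset.sum_mul, ← Finset.sum_add_distrib, ← Finset.sum_add_distrib]
  refine Finset.sum_congr rfl fun i _ => ?_
  rw [Finset.sum_mul, Finset.sum_mul, ← Finset.sum_add_distrib, ← Finset.sum_add_distrib]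
  exact Finset.sum_congr rfl fun j _ => by ring

lemma hessQ_zero_left {d : ℕ} (M A B E2 : Matrix (Fin d) (Fin d) ℝ) :
    hessQ M A B 0 E2 = 2 * froSq (A * E2) := by
  unfold hessQ
  have heq : (fun t : ℝ => loss M (A + t • (0 : Matrix (Fin d) (Fin d) ℝ)) (B + t • E2)) =
      fun t : ℝ => froSq (A * B - M) +
        (∑ i, ∑ j, 2 * (A * B - M) i j * (A * E2) i j) * t + froSq (A * E2) * t ^ 2 := by
    funext t
    have : A * (B + t • E2) - M = (A * B - M) + t • (A * E2) := by
      rw [Matrix.mul_add, Matrix.mul_smul]; abel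
    rw [loss, smul_zero, add_zero, this, froSq_add_smul]
  rw [heq, iter2_quad]


/-- For every `a > 0`, `λ_min(a⁻¹ W1, a W2) ≤ 2 a⁻² σ_min(W1)²`. -/
theorem lamMin_scaled_upper_bound (d : ℕ) (hd : 0 < d)
    (M W1 W2 : Matrix (Fin d) (Fin d) ℝ) (a : ℝ) (ha : 0 < a) :
    lamMin M (a⁻¹ • W1) (a • W2) ≤ 2 * (a ^ 2)⁻¹ * sigmaMin W1 ^ 2 := by
  set S : Set ℝ := {q : ℝ | ∃ E1 E2 : Matrix (Fin d) (Fin d) ℝ,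
    froSq E1 + froSq E2 = 1 ∧ q = hessQ M (a⁻¹ • W1) (a • W2) E1 E2} with hS
  have hRHSnn : 0 ≤ 2 * (a ^ 2)⁻¹ * sigmaMin W1 ^ 2 := by
    have hσ : 0 ≤ sigmaMin W1 := by
      apply Real.sInf_nonneg
      rintro y ⟨x, -, rfl⟩
      exact Real.sqrt_nonneg _
    positivity
  by_cases hb : BddBelow S
  · -- main case
    have hj0 : (⟨0, hd⟩ : Fin d) ∈ (Finset.univ : Finset (Fin d)) := Finset.mem_univ _
    set j0 : Fin d := ⟨0, hd⟩
    -- key: for each unit vector x, lamMin ≤ 2 a⁻² ‖W1 x‖²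
    have key : ∀ x : Fin d → ℝ, euclNorm x = 1 →
        lamMin M (a⁻¹ • W1) (a • W2) ≤ 2 * (a ^ 2)⁻¹ * euclNorm (W1.mulVec x) ^ 2 := by
      intro x hx
      set E2 : Matrix (Fin d) (Fin d) ℝ := fun i j => if j = j0 then x i else 0 with hE2
      have hsum : ∑ i, (x i) ^ 2 = 1 := by
        have h0 : 0 ≤ ∑ i, (x i) ^ 2 := Finset.sum_nonneg fun i _ => sq_nonneg _
        have := hx
        rw [euclNorm] at this
        nlinarith [Real.sq_sqrt h0]
      have hfro : froSq E2 = 1 := by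
        rw [froSq]
        have : ∀ i : Fin d, ∑ j, (E2 i j) ^ 2 = (x i) ^ 2 := by
          intro i
          rw [hE2]
          simp [Finset.sum_ite_eq']
        simp_rw [this]; exact hsum
      have hmul : (a⁻¹ • W1) * E2 = fun i j => if j = j0 then a⁻¹ * (W1.mulVec x) i else 0 := by
        funext i j
        rw [Matrix.mul_apply, hE2]
        by_cases hj : j = j0 <;> simp [hj, Matrix.smul_apply, mulVec, dotProduct,
          Finset.mul_sum, mul_assoc]
      have hfro2 : froSq ((a⁻¹ • W1) * E2) = (a ^ 2)⁻¹ * euclNorm (W1.mulVec x) ^ 2 := by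
        rw [froSq, hmul]
        have h0 : 0 ≤ ∑ i, (W1.mulVec x i) ^ 2 := Finset.sum_nonneg fun i _ => sq_nonneg _
        have he : euclNorm (W1.mulVec x) ^ 2 = ∑ i, (W1.mulVec x i) ^ 2 := by
          rw [euclNorm, Real.sq_sqrt h0]
        rw [he]
        rw [Finset.mul_sum]
        refine Finset.sum_congr rfl fun i _ => ?_
        rw [Finset.sum_eq_single j0]
        · simp; ring
        · intro b _ hbne; simp [hbne]
        · intro h; exact absurd (Finset.mem_univ _) h
      have hmem : 2 * froSq ((a⁻¹ • W1) * E2) ∈ S := by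
        refine ⟨0, E2, by rw [show froSq (0:Matrix (Fin d) (Fin d) ℝ) = 0 by simp [froSq], zero_add]; exact hfro, ?_⟩
        rw [hessQ_zero_left]
      have := csInf_le hb hmem
      rw [lamMin, ← hS]
      calc sInf S ≤ 2 * froSq ((a⁻¹ • W1) * E2) := this
        _ = 2 * (a ^ 2)⁻¹ * euclNorm (W1.mulVec x) ^ 2 := by rw [hfro2]; ring
    -- the sigma set
    set S' : Set ℝ := {y : ℝ | ∃ x : Fin d → ℝ, euclNorm x = 1 ∧ y = euclNorm (W1.mulVec x)} with hS'
    have hS'ne : S'.Nonempty := by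
      refine ⟨euclNorm (W1.mulVec (fun i => if i = j0 then 1 else 0)), fun i => if i = j0 then 1 else 0, ?_, rfl⟩
      rw [euclNorm]
      have : ∑ i, ((if i = j0 then (1:ℝ) else 0)) ^ 2 = 1 := by
        rw [Finset.sum_eq_single j0] <;> simp
      rw [this, Real.sqrt_one]
    have hσnn : 0 ≤ sigmaMin W1 := by
      apply Real.sInf_nonneg
      rintro y ⟨x, -, rfl⟩
      exact Real.sqrt_nonneg _
    -- limit argument
    have hev : ∀ ε : ℝ, 0 < ε →
        lamMin M (a⁻¹ • W1) (a • W2) ≤ 2 * (a ^ 2)⁻¹ * (sigmaMin W1 + ε) ^ 2 := by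
      intro ε hε
      obtain ⟨y, hy, hylt⟩ := Real.lt_sInf_add_pos hS'ne hε
      obtain ⟨x, hx1, rfl⟩ := hy
      have h1 := key x hx1
      have hyn : 0 ≤ euclNorm (W1.mulVec x) := Real.sqrt_nonneg _
      have : euclNorm (W1.mulVec x) ^ 2 ≤ (sigmaMin W1 + ε) ^ 2 := by
        have : euclNorm (W1.mulVec x) < sigmaMin W1 + ε := by
          rwa [sigmaMin, ← hS']
        nlinarith
      have hpos : (0:ℝ) ≤ 2 * (a ^ 2)⁻¹ := by positivity
      nlinarith
    have htend : Filter.Tendsto (fun ε : ℝ => 2 * (a ^ 2)⁻¹ * (sigmaMin W1 + ε) ^ 2)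
        (nhdsWithin 0 (Set.Ioi 0)) (nhds (2 * (a ^ 2)⁻¹ * sigmaMin W1 ^ 2)) := by
      have hc : Filter.Tendsto (fun ε : ℝ => 2 * (a ^ 2)⁻¹ * (sigmaMin W1 + ε) ^ 2)
          (nhds 0) (nhds (2 * (a ^ 2)⁻¹ * (sigmaMin W1 + 0) ^ 2)) := by
        apply Continuous.tendsto
        continuity
      rw [add_zero] at hc
      exact hc.mono_left nhdsWithin_le_nhds
    exact ge_of_tendsto htend (Filter.eventually_of_mem self_mem_nhdsWithin
      fun ε hε => hev ε hε)
  · -- sInf of non-bddBelow set is 0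
    rw [lamMin, ← hS, Real.sInf_of_not_bddBelow hb]
    exact hRHSnn
end
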